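/- Let N(v) = Σ_{j∈J} m_j·|D(v,w_j)| be a norm of Culler–Shalen type on ℝ², assume there exist j, k ∈ J with D(w_j,w_k) ≠ 0, and let α, β ∈ ℤ² be linearly independent. If N(β) ≤ N(γ) for every nonzero γ ∈ ℤ² (β has minimal norm among nonzero lattice classes), then there exists j ∈ J with |D(β,w_j)| ≤ |D(α,w_j)|. -/
import Mathlib


/-- `D(v,w) = v₁w₂ − v₂w₁` for `v, w ∈ ℝ²`. -/
noncomputable def Dd (v w : ℝ × ℝ) : ℝ := v.1 * w.2 - v.2 * w.1

/-- Inclusion of the lattice `ℤ²` into `ℝ²`. -/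
def toR (w : ℤ × ℤ) : ℝ × ℝ := ((w.1 : ℝ), (w.2 : ℝ))

/-- For a norm of Culler–Shalen type `N(v) = Σ_j m_j·|D(v,w_j)|`
(with some `D(w_j,w_k) ≠ 0`) and linearly independent `α, β ∈ ℤ²`, if `β` has
minimal norm among nonzero lattice classes, then there is `j ∈ J` with
`|D(β,w_j)| ≤ |D(α,w_j)|`. -/
theorem boundary_class_of_minimal_norm
    {J : Type*} [Fintype J] [Nonempty J]
    (m : J → ℝ) (hm : ∀ j, 0 < m j)
    (w : J → ℤ × ℤ) (hw : ∀ j, Int.gcd (w j).1 (w j).2 = 1)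
    (hnorm : ∃ j k, Dd (toR (w j)) (toR (w k)) ≠ 0)
    (α β : ℤ × ℤ) (hind : Dd (toR α) (toR β) ≠ 0)
    (N : (ℝ × ℝ) → ℝ) (hN : ∀ v, N v = ∑ j, m j * |Dd v (toR (w j))|)
    (hmin : ∀ γ : ℤ × ℤ, γ ≠ 0 → N (toR β) ≤ N (toR γ)) :
    ∃ j, |Dd (toR β) (toR (w j))| ≤ |Dd (toR α) (toR (w j))| := by
  by_contra h
  push_neg at h
  have hα : α ≠ 0 := by
    rintro rfl
    apply hind
    simp [Dd, toR]
  have hlt : N (toR α) < N (toR β) := by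
    rw [hN, hN]
    apply Finset.sum_lt_sum_of_nonempty
    · exact Finset.univ_nonempty
    · intro j _
      exact mul_lt_mul_of_pos_left (h j) (hm j)
  exact absurd (hmin α hα) (not_le.mpr hlt)
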